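/- The equation x^x = 2 has no rational solution with x > 0; hence its unique real solution x > 1 is irrational. -/

import Mathlib

theorem no_rat_sol : ¬ ∃ x : ℚ, 0 < x ∧ (x : ℝ) ^ (x : ℝ) = 2 := by
  rintro ⟨x, hx, h⟩
  have hx0 : (0:ℝ) ≤ (x:ℝ) := by exact_mod_cast hx.le
  have hn : 0 < x.num := Rat.num_pos.mpr hx
  set d := x.den with hd
  have hd0 : 0 < d := x.pos
  -- raise both sides to power d
  have h2 : ((x:ℝ) ^ (x:ℝ)) ^ (d:ℕ) = 2 ^ (d:ℕ) := by rw [h]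
  have hmul : (x:ℝ) * (d:ℕ) = (x.num : ℝ) := by
    have : x * (d:ℚ) = (x.num : ℚ) := by
      rw [hd]
      rw [mul_comm]
      rw [mul_comm, Rat.mul_den_eq_num]
    exact_mod_cast this
  have h3 : (x:ℝ) ^ (x.num.toNat : ℕ) = 2 ^ (d:ℕ) := by
    rw [← h2, ← Real.rpow_natCast ((x:ℝ)^(x:ℝ)) d, ← Real.rpow_mul hx0, hmul]
    rw [← Real.rpow_natCast (x:ℝ) x.num.toNat]
    congr 1
    exact_mod_cast Int.toNat_of_nonneg hn.le
  have h4 : x ^ (x.num.toNat) = 2 ^ d := by exact_mod_cast h3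
  have hden : x.den ^ x.num.toNat = 1 := by
    have := congrArg Rat.den h4
    simpa [Rat.den_pow] using this
  have hd1 : x.den = 1 := by
    have hm : x.num.toNat ≠ 0 := by omega
    have hm : x.num.toNat ≠ 0 := by omega
    exact (pow_eq_one_iff.mp hden).resolve_right hm
  have hxint : x = (x.num : ℚ) := by
    rw [← Rat.num_div_den x, hd1]; simp
  rw [hxint] at h4
  rw [hd, hd1] at h4
  have h5 : (x.num : ℚ) ^ x.num.toNat = 2 := by simpa using h4
  have h6 : x.num ^ x.num.toNat = 2 := by exact_mod_cast h5
  set k := x.num.toNat with hk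
  have hnk : x.num = (k : ℤ) := (Int.toNat_of_nonneg hn.le).symm
  rw [hnk] at h6
  have h7 : k ^ k = 2 := by exact_mod_cast h6
  have hk1 : 1 ≤ k := by omega
  rcases Nat.lt_or_ge k 2 with hlt | hge
  · interval_cases k <;> omega
  · have : 2 ^ 2 ≤ k ^ k := le_trans (Nat.pow_le_pow_left hge 2) (Nat.pow_le_pow_right (by omega) hge)
    omega

theorem stmt_2 :
    (¬ ∃ x : ℚ, 0 < x ∧ (x : ℝ) ^ (x : ℝ) = 2) ∧
    ∀ x : ℝ, 1 < x → x ^ x = 2 → Irrational x := by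
  refine ⟨no_rat_sol, ?_⟩
  intro x hx1 hx2
  rw [Irrational]
  rintro ⟨q, rfl⟩
  exact no_rat_sol ⟨q, by exact_mod_cast zero_lt_one.trans hx1, hx2⟩
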